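/- Let A ∈ ℝ with cos(Aπ) ≠ 0, let k > 0 with sin(kπ) ≠ 0, and let (a_j)_{j∈ℤ} be complex numbers. Define ψ, φ : ℝ → ℂ by setting, for x ∈ [jπ, (j+1)π): ψ(x) = e^{−iA(x−jπ)}·[ a_j·cos(k(x−jπ)) + (a_{j+1}e^{iAπ} − a_j·cos(kπ))·sin(k(x−jπ))/sin(kπ) ] and φ(x) = e^{iA(x−jπ)}·[ a_j·cos(k(x−jπ)) + (a_{j+1}e^{−iAπ} − a_j·cos(kπ))·sin(k(x−jπ))/sin(kπ) ]. Then: (i) Σ_{j∈ℤ} |a_j|² < ∞ if and only if ∫_ℝ (|ψ(x)|² + |φ(x)|²) dx < ∞; and (ii) the sequence (a_j) is bounded if and only if the functions ψ and φ are bounded on ℝ. -/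

import Mathlib

open scoped Real
open MeasureTheory intervalIntegral

lemma abs_sin_lt {t : ℝ} (ht : 0 < t) : |Real.sin t| < t := by
  rcases le_or_gt t 1 with h | h
  · rw [abs_of_pos (Real.sin_pos_of_pos_of_lt_pi ht (h.trans_lt (by linarith [Real.pi_gt_three])))]
    exact Real.sin_lt ht
  · calc |Real.sin t| ≤ 1 := Real.abs_sin_le_one t
      _ < t := h

lemma int_cos_sq {k : ℝ} (hk : k ≠ 0) :
    ∫ u in (0:ℝ)..π, Real.cos (k*u)^2 = π/2 + Real.cos (k*π) * Real.sin (k*π) / (2*k) := by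
  rw [intervalIntegral.integral_comp_mul_left (fun x => Real.cos x ^ 2) hk]
  rw [integral_cos_sq]
  simp only [mul_zero, Real.sin_zero, Real.cos_zero]
  field_simp
  have hinv : k * k⁻¹ = 1 := mul_inv_cancel₀ hk
  linear_combination (Real.cos (k*π) * Real.sin (k*π) + k*π) * hinv

lemma int_sin_sq {k : ℝ} (hk : k ≠ 0) :
    ∫ u in (0:ℝ)..π, Real.sin (k*u)^2 = π/2 - Real.cos (k*π) * Real.sin (k*π) / (2*k) := by
  rw [intervalIntegral.integral_comp_mul_left (fun x => Real.sin x ^ 2) hk]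
  rw [integral_sin_sq]
  simp only [mul_zero, Real.sin_zero, Real.cos_zero]
  field_simp
  have hinv : k * k⁻¹ = 1 := mul_inv_cancel₀ hk
  linear_combination (k*π - Real.sin (k*π) * Real.cos (k*π)) * hinv

lemma int_sin_cos {k : ℝ} (hk : k ≠ 0) :
    ∫ u in (0:ℝ)..π, Real.sin (k*u) * Real.cos (k*u) = Real.sin (k*π)^2 / (2*k) := by
  rw [intervalIntegral.integral_comp_mul_left (fun x => Real.sin x * Real.cos x) hk]
  rw [integral_sin_mul_cos₁]
  simp only [mul_zero, Real.sin_zero, smul_eq_mul]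
  field_simp
  ring

/-- The upper-halfcircle component reconstructed on `[jπ, (j+1)π)` from vertex values. -/
noncomputable def psiRec (A k : ℝ) (a : ℤ → ℂ) (j : ℤ) (x : ℝ) : ℂ :=
  Complex.exp (-(Complex.I) * ((A * (x - (j : ℝ) * π) : ℝ) : ℂ)) *
    (a j * ((Real.cos (k * (x - (j : ℝ) * π)) : ℝ) : ℂ) +
      (a (j + 1) * Complex.exp (Complex.I * ((A * π : ℝ) : ℂ))
          - a j * ((Real.cos (k * π) : ℝ) : ℂ)) *
        ((Real.sin (k * (x - (j : ℝ) * π)) / Real.sin (k * π) : ℝ) : ℂ))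

/-- The lower-halfcircle component reconstructed on `[jπ, (j+1)π)` from vertex values. -/
noncomputable def phiRec (A k : ℝ) (a : ℤ → ℂ) (j : ℤ) (x : ℝ) : ℂ :=
  Complex.exp (Complex.I * ((A * (x - (j : ℝ) * π) : ℝ) : ℂ)) *
    (a j * ((Real.cos (k * (x - (j : ℝ) * π)) : ℝ) : ℂ) +
      (a (j + 1) * Complex.exp (-(Complex.I) * ((A * π : ℝ) : ℂ))
          - a j * ((Real.cos (k * π) : ℝ) : ℂ)) *
        ((Real.sin (k * (x - (j : ℝ) * π)) / Real.sin (k * π) : ℝ) : ℂ))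

lemma phiRec_eq (A k : ℝ) (a : ℤ → ℂ) (j : ℤ) (x : ℝ) :
    phiRec A k a j x = psiRec (-A) k a j x := by
  unfold phiRec psiRec
  push_cast
  ring_nf

noncomputable def betaC (A k : ℝ) (a : ℤ → ℂ) (j : ℤ) : ℂ :=
  (a (j + 1) * Complex.exp (Complex.I * ((A * π : ℝ) : ℂ))
      - a j * ((Real.cos (k * π) : ℝ) : ℂ)) / ((Real.sin (k * π) : ℝ) : ℂ)

lemma psiRec_eq_beta (A k : ℝ) (a : ℤ → ℂ) (j : ℤ) (x : ℝ) :
    psiRec A k a j x = Complex.exp (-(Complex.I) * ((A * (x - (j : ℝ) * π) : ℝ) : ℂ)) *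
      (a j * ((Real.cos (k * (x - (j : ℝ) * π)) : ℝ) : ℂ)
        + betaC A k a j * ((Real.sin (k * (x - (j : ℝ) * π)) : ℝ) : ℂ)) := by
  unfold psiRec betaC
  push_cast
  ring

lemma psiRec_apply_left {k : ℝ} (A : ℝ) (a : ℤ → ℂ) (j : ℤ) :
    psiRec A k a j ((j : ℝ) * π) = a j := by
  unfold psiRec
  simp

lemma abs_mix_sq (z w : ℂ) (c t : ℝ) :
    ‖z * (c:ℂ) + w * (t:ℂ)‖ ^ 2
      = Complex.normSq z * c^2 + Complex.normSq w * t^2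
        + 2 * (z * (starRingEnd ℂ) w).re * (t * c) := by
  rw [← Complex.sq_norm]
  simp only [Complex.sq_norm, Complex.normSq_apply, Complex.add_re, Complex.add_im,
    Complex.mul_re, Complex.mul_im, Complex.ofReal_re, Complex.ofReal_im,
    Complex.conj_re, Complex.conj_im]
  ring

lemma abs_psiRec_sq (A k : ℝ) (a : ℤ → ℂ) (j : ℤ) (x : ℝ) :
    ‖psiRec A k a j x‖ ^ 2
      = Complex.normSq (a j) * Real.cos (k * (x - (j : ℝ) * π))^2
        + Complex.normSq (betaC A k a j) * Real.sin (k * (x - (j : ℝ) * π))^2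
        + 2 * (a j * (starRingEnd ℂ) (betaC A k a j)).re
            * (Real.sin (k * (x - (j : ℝ) * π)) * Real.cos (k * (x - (j : ℝ) * π))) := by
  rw [psiRec_eq_beta, norm_mul, mul_pow, Complex.norm_exp]
  have : (-(Complex.I) * ((A * (x - (j : ℝ) * π) : ℝ) : ℂ)).re = 0 := by simp
  rw [this, Real.exp_zero, one_pow, one_mul, abs_mix_sq]

lemma int_quad {k : ℝ} (hk : k ≠ 0) (P Q R : ℝ) :
    ∫ u in (0:ℝ)..π, (P * Real.cos (k*u)^2 + Q * Real.sin (k*u)^2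
        + R * (Real.sin (k*u) * Real.cos (k*u)))
      = P * (π/2 + Real.cos (k*π) * Real.sin (k*π) / (2*k))
        + Q * (π/2 - Real.cos (k*π) * Real.sin (k*π) / (2*k))
        + R * (Real.sin (k*π)^2 / (2*k)) := by
  have c1 : Continuous fun u : ℝ => P * Real.cos (k*u)^2 := by fun_prop
  have c2 : Continuous fun u : ℝ => Q * Real.sin (k*u)^2 := by fun_prop
  have c3 : Continuous fun u : ℝ => R * (Real.sin (k*u) * Real.cos (k*u)) := by fun_prop
  have h1 := c1.intervalIntegrable (μ := MeasureTheory.volume) (0:ℝ) π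
  have h2 := c2.intervalIntegrable (μ := MeasureTheory.volume) (0:ℝ) π
  have h3 := c3.intervalIntegrable (μ := MeasureTheory.volume) (0:ℝ) π
  rw [intervalIntegral.integral_add (h1.add h2) h3, intervalIntegral.integral_add h1 h2,
    intervalIntegral.integral_const_mul, intervalIntegral.integral_const_mul,
    intervalIntegral.integral_const_mul, int_cos_sq hk, int_sin_sq hk, int_sin_cos hk]

lemma int_abs_psiRec_sq (A : ℝ) {k : ℝ} (hk : k ≠ 0) (a : ℤ → ℂ) (j : ℤ) :
    ∫ x in Set.Ico ((j : ℝ) * π) (((j : ℝ) + 1) * π), ‖psiRec A k a j x‖ ^ 2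
      = Complex.normSq (a j) * (π/2 + Real.cos (k*π) * Real.sin (k*π) / (2*k))
        + Complex.normSq (betaC A k a j) * (π/2 - Real.cos (k*π) * Real.sin (k*π) / (2*k))
        + (2 * (a j * (starRingEnd ℂ) (betaC A k a j)).re) * (Real.sin (k*π)^2 / (2*k)) := by
  have hle : (j : ℝ) * π ≤ ((j : ℝ) + 1) * π := by nlinarith [Real.pi_pos]
  set P := Complex.normSq (a j) with hP
  set Q := Complex.normSq (betaC A k a j) with hQ
  set R := 2 * (a j * (starRingEnd ℂ) (betaC A k a j)).re with hR
  set g : ℝ → ℝ := fun u => P * Real.cos (k*u)^2 + Q * Real.sin (k*u)^2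
      + R * (Real.sin (k*u) * Real.cos (k*u)) with hg
  have key : ∀ x : ℝ, ‖psiRec A k a j x‖ ^ 2 = g (x - (j:ℝ)*π) := by
    intro x; rw [hg]; rw [abs_psiRec_sq]; try ring
  rw [MeasureTheory.integral_Ico_eq_integral_Ioo, ← MeasureTheory.integral_Ioc_eq_integral_Ioo,
    ← intervalIntegral.integral_of_le hle]
  calc ∫ x in (j:ℝ)*π..((j:ℝ)+1)*π, ‖psiRec A k a j x‖ ^ 2
      = ∫ u in ((j:ℝ)*π - (j:ℝ)*π)..(((j:ℝ)+1)*π - (j:ℝ)*π), g u := by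
        rw [← intervalIntegral.integral_comp_sub_right g ((j:ℝ)*π)]
        exact intervalIntegral.integral_congr fun x _ => key x
    _ = ∫ u in (0:ℝ)..π, g u := by
        rw [show (j:ℝ)*π - (j:ℝ)*π = 0 by ring, show ((j:ℝ)+1)*π - (j:ℝ)*π = π by ring]
    _ = _ := by rw [hg]; rw [int_quad hk]

lemma quad_lower (C2 S2 X P Q R : ℝ) (hC2 : 0 < C2) (hS2 : 0 < S2)
    (hD : 0 < C2*S2 - X^2) (hP : 0 ≤ P) (hQ : 0 ≤ Q) (hR : R^2 ≤ P*Q) :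
    (C2*S2 - X^2) / (C2+S2) * P ≤ P*C2 + Q*S2 + 2*R*X := by
  have hπ : 0 < C2 + S2 := by linarith
  rcases eq_or_lt_of_le hP with h|h
  · have hR0 : R = 0 := by nlinarith [sq_nonneg R]
    rw [← h, hR0]
    have : 0 ≤ Q * S2 := mul_nonneg hQ hS2.le
    simp only [mul_zero, zero_mul, mul_comm]
    nlinarith
  · rw [div_mul_eq_mul_div, div_le_iff₀ hπ]
    nlinarith [sq_nonneg (S2*R + X*P), mul_pos h hS2, mul_pos h hC2,
      mul_nonneg (mul_nonneg hD.le (sq_nonneg P)) hC2.le,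
      mul_le_mul_of_nonneg_left hR (le_of_lt (mul_pos (mul_pos hπ hS2) hS2)),
      mul_pos (mul_pos h h) hD, mul_nonneg hQ hS2.le]

lemma re_sq_le (z w : ℂ) : (z * (starRingEnd ℂ) w).re ^ 2 ≤ Complex.normSq z * Complex.normSq w := by
  have h := Complex.normSq_apply (z * (starRingEnd ℂ) w)
  have h2 : Complex.normSq (z * (starRingEnd ℂ) w) = Complex.normSq z * Complex.normSq w := by
    rw [Complex.normSq_mul, Complex.normSq_conj]
  nlinarith [sq_nonneg (z * (starRingEnd ℂ) w).im]

lemma sin_sq_lt {k : ℝ} (hk : 0 < k) : Real.sin (k*π)^2 < k^2*π^2 := by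
  have h := abs_sin_lt (mul_pos hk Real.pi_pos)
  have h2 : Real.sin (k*π)^2 = |Real.sin (k*π)|^2 := (sq_abs _).symm
  nlinarith [abs_nonneg (Real.sin (k*π)), mul_pos hk Real.pi_pos]

lemma cs_bounds {k : ℝ} (hk : 0 < k) :
    0 < π/2 + Real.cos (k*π) * Real.sin (k*π) / (2*k)
    ∧ 0 < π/2 - Real.cos (k*π) * Real.sin (k*π) / (2*k) := by
  have habs : |Real.cos (k*π) * Real.sin (k*π)| < k*π := by
    rw [abs_mul]
    calc |Real.cos (k*π)| * |Real.sin (k*π)| ≤ 1 * |Real.sin (k*π)| := by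
          gcongr; exact Real.abs_cos_le_one _
      _ = |Real.sin (k*π)| := one_mul _
      _ < k*π := abs_sin_lt (mul_pos hk Real.pi_pos)
  obtain ⟨h1, h2⟩ := abs_lt.mp habs
  constructor
  · have : π/2 + Real.cos (k*π) * Real.sin (k*π) / (2*k)
        = (π*k + Real.cos (k*π) * Real.sin (k*π)) / (2*k) := by field_simp
    rw [this]
    apply div_pos (by nlinarith) (by linarith)
  · have : π/2 - Real.cos (k*π) * Real.sin (k*π) / (2*k)
        = (π*k - Real.cos (k*π) * Real.sin (k*π)) / (2*k) := by field_simp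
    rw [this]
    apply div_pos (by nlinarith) (by linarith)

lemma det_pos {k : ℝ} (hk : 0 < k) :
    0 < (π/2 + Real.cos (k*π) * Real.sin (k*π) / (2*k))
          * (π/2 - Real.cos (k*π) * Real.sin (k*π) / (2*k))
        - (Real.sin (k*π)^2 / (2*k))^2 := by
  have h := sin_sq_lt hk
  have hc : Real.cos (k*π)^2 + Real.sin (k*π)^2 = 1 := by
    rw [add_comm]; exact Real.sin_sq_add_cos_sq (k*π)
  have hk2 : (0:ℝ) < k^2 := by positivity
  have expand : (π/2 + Real.cos (k*π) * Real.sin (k*π) / (2*k))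
          * (π/2 - Real.cos (k*π) * Real.sin (k*π) / (2*k))
        - (Real.sin (k*π)^2 / (2*k))^2
      = (k^2*π^2 - Real.sin (k*π)^2) / (4*k^2) := by
    have e2 : (Real.cos (k*π) * Real.sin (k*π))^2 + Real.sin (k*π)^4 = Real.sin (k*π)^2 := by
      linear_combination (Real.sin (k*π))^2 * hc
    field_simp
    rw [mul_comm k π] at e2
    linear_combination (-4) * e2
  rw [expand]
  apply div_pos (by linarith) (by positivity)

lemma lower_per_interval (A : ℝ) {k : ℝ} (hk : 0 < k) (a : ℤ → ℂ) :
    ∃ c : ℝ, 0 < c ∧ ∀ j : ℤ,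
      c * ‖a j‖ ^ 2
        ≤ ∫ x in Set.Ico ((j : ℝ) * π) (((j : ℝ) + 1) * π),
            ‖psiRec A k a j x‖ ^ 2 := by
  set C2 := π/2 + Real.cos (k*π) * Real.sin (k*π) / (2*k) with hC2d
  set S2 := π/2 - Real.cos (k*π) * Real.sin (k*π) / (2*k) with hS2d
  set X := Real.sin (k*π)^2 / (2*k) with hXd
  obtain ⟨hC2, hS2⟩ := cs_bounds hk
  have hD := det_pos hk
  rw [← hC2d] at hC2 hD
  rw [← hS2d] at hS2 hD
  rw [← hXd] at hD
  refine ⟨(C2*S2 - X^2)/(C2+S2), div_pos hD (by linarith), fun j => ?_⟩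
  rw [int_abs_psiRec_sq A (ne_of_gt hk) a j, Complex.sq_norm, ← hC2d, ← hS2d, ← hXd]
  have := quad_lower C2 S2 X (Complex.normSq (a j)) (Complex.normSq (betaC A k a j))
    ((a j * (starRingEnd ℂ) (betaC A k a j)).re) hC2 hS2 hD
    (Complex.normSq_nonneg _) (Complex.normSq_nonneg _) (re_sq_le _ _)
  linarith [this]

lemma abs_psiRec_le (A : ℝ) {k : ℝ} (hks : Real.sin (k*π) ≠ 0) (a : ℤ → ℂ) (j : ℤ) (x : ℝ) :
    ‖psiRec A k a j x‖
      ≤ (1 + 1/|Real.sin (k*π)|) * (‖a j‖ + ‖a (j+1)‖) := by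
  have hs : 0 < |Real.sin (k*π)| := abs_pos.mpr hks
  unfold psiRec
  rw [norm_mul, Complex.norm_exp]
  have h0 : (-(Complex.I) * ((A * (x - (j : ℝ) * π) : ℝ) : ℂ)).re = 0 := by simp
  rw [h0, Real.exp_zero, one_mul]
  set A1 := ‖a j‖
  set A2 := ‖a (j+1)‖
  have hA1 : 0 ≤ A1 := norm_nonneg _
  have hA2 : 0 ≤ A2 := norm_nonneg _
  have t1 : ‖a j * ((Real.cos (k * (x - (j : ℝ) * π)) : ℝ) : ℂ)‖ ≤ A1 := by
    rw [norm_mul, Complex.norm_real, Real.norm_eq_abs]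
    calc A1 * |Real.cos (k * (x - (j : ℝ) * π))| ≤ A1 * 1 := by
          gcongr; exact Real.abs_cos_le_one _
      _ = A1 := mul_one _
  have tB : ‖a (j + 1) * Complex.exp (Complex.I * ((A * π : ℝ) : ℂ))
      - a j * ((Real.cos (k * π) : ℝ) : ℂ)‖ ≤ A2 + A1 := by
    calc ‖a (j + 1) * Complex.exp (Complex.I * ((A * π : ℝ) : ℂ))
          - a j * ((Real.cos (k * π) : ℝ) : ℂ)‖
        ≤ ‖a (j + 1) * Complex.exp (Complex.I * ((A * π : ℝ) : ℂ))‖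
          + ‖a j * ((Real.cos (k * π) : ℝ) : ℂ)‖ := by
          exact norm_sub_le _ _
      _ ≤ A2 * 1 + A1 * 1 := by
          rw [norm_mul, norm_mul, Complex.norm_exp, Complex.norm_real, Real.norm_eq_abs]
          have : (Complex.I * ((A * π : ℝ) : ℂ)).re = 0 := by simp
          rw [this, Real.exp_zero]
          gcongr
          exact Real.abs_cos_le_one _
      _ = A2 + A1 := by ring
  have t2 : ‖(a (j + 1) * Complex.exp (Complex.I * ((A * π : ℝ) : ℂ))
        - a j * ((Real.cos (k * π) : ℝ) : ℂ))
      * ((Real.sin (k * (x - (j : ℝ) * π)) / Real.sin (k * π) : ℝ) : ℂ)‖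
      ≤ (A2 + A1) * (1/|Real.sin (k*π)|) := by
    rw [norm_mul, Complex.norm_real, Real.norm_eq_abs, abs_div]
    have hq : |Real.sin (k * (x - (j:ℝ)*π))| / |Real.sin (k*π)| ≤ 1/|Real.sin (k*π)| := by
      gcongr
      exact Real.abs_sin_le_one _
    exact mul_le_mul tB hq (by positivity) (by positivity)
  calc ‖_‖ ≤ _ + _ := norm_add_le _ _
    _ ≤ A1 + (A2 + A1) * (1/|Real.sin (k*π)|) := add_le_add t1 t2
    _ ≤ (1 + 1/|Real.sin (k*π)|) * (A1 + A2) := by nlinarith [one_div_pos.mpr hs]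

lemma mem_I (x : ℝ) :
    x ∈ Set.Ico (((⌊x/π⌋ : ℤ) : ℝ) * π) ((((⌊x/π⌋ : ℤ) : ℝ) + 1) * π) := by
  have hπ := Real.pi_pos
  constructor
  · have h := Int.floor_le (x/π)
    have := mul_le_mul_of_nonneg_right h hπ.le
    rwa [div_mul_cancel₀ x (ne_of_gt hπ)] at this
  · have h := Int.lt_floor_add_one (x/π)
    have := mul_lt_mul_of_pos_right h hπ
    rwa [div_mul_cancel₀ x (ne_of_gt hπ)] at this

lemma floor_eq_of_mem {j : ℤ} {x : ℝ}
    (hx : x ∈ Set.Ico ((j : ℝ) * π) (((j : ℝ) + 1) * π)) : ⌊x/π⌋ = j := by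
  have hπ := Real.pi_pos
  obtain ⟨h1, h2⟩ := hx
  rw [Int.floor_eq_iff]
  constructor
  · rwa [le_div_iff₀ hπ]
  · rw [div_lt_iff₀ hπ]; push_cast; linarith

lemma continuous_psiRec (A k : ℝ) (a : ℤ → ℂ) (j : ℤ) :
    Continuous (fun x => psiRec A k a j x) := by
  unfold psiRec
  fun_prop

lemma continuous_abs_sq_psiRec (A k : ℝ) (a : ℤ → ℂ) (j : ℤ) :
    Continuous (fun x => ‖psiRec A k a j x‖ ^ 2) :=
  (continuous_norm.comp (continuous_psiRec A k a j)).pow 2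

/-- the `ℓ²–L²` and `ℓ^∞–L^∞` correspondence between the vertex values
`a_j` and the reconstructed wave-function components `ψ, φ`. -/
theorem duality_lp_correspondence (A : ℝ) (hA : Real.cos (A * π) ≠ 0) (k : ℝ) (hk : 0 < k)
    (hks : Real.sin (k * π) ≠ 0) (a : ℤ → ℂ) (ψ φ : ℝ → ℂ)
    (hψ : ∀ j : ℤ, ∀ x ∈ Set.Ico ((j : ℝ) * π) (((j : ℝ) + 1) * π), ψ x = psiRec A k a j x)
    (hφ : ∀ j : ℤ, ∀ x ∈ Set.Ico ((j : ℝ) * π) (((j : ℝ) + 1) * π), φ x = phiRec A k a j x) :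
    (Summable (fun j : ℤ => ‖a j‖ ^ 2) ↔
      MeasureTheory.Integrable (fun x : ℝ => ‖ψ x‖ ^ 2 + ‖φ x‖ ^ 2)) ∧
    ((∃ C : ℝ, ∀ j : ℤ, ‖a j‖ ≤ C) ↔
      (∃ C : ℝ, ∀ x : ℝ, ‖ψ x‖ ≤ C ∧ ‖φ x‖ ≤ C)) := by
  have hπ := Real.pi_pos
  set I : ℤ → Set ℝ := fun j => Set.Ico ((j : ℝ) * π) (((j : ℝ) + 1) * π) with hI
  have hφ' : ∀ j : ℤ, ∀ x ∈ I j, φ x = psiRec (-A) k a j x := fun j x hx =>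
    (hφ j x hx).trans (phiRec_eq A k a j x)
  have hIm : ∀ j, MeasurableSet (I j) := fun j => measurableSet_Ico
  have hmemI : ∀ x : ℝ, x ∈ I ⌊x/π⌋ := fun x => mem_I x
  have hcover : (⋃ j, I j) = Set.univ :=
    Set.eq_univ_of_forall fun x => Set.mem_iUnion.mpr ⟨⌊x/π⌋, hmemI x⟩
  have hdisj : Pairwise (Function.onFun Disjoint I) := by
    intro i j hij
    refine Set.disjoint_left.mpr fun x hxi hxj => hij ?_
    rw [← floor_eq_of_mem hxi, ← floor_eq_of_mem hxj]
  have hjmem : ∀ j : ℤ, (j : ℝ) * π ∈ I j := by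
    intro j
    have : ((j : ℝ) + 1) * π = (j : ℝ) * π + π := by ring
    exact ⟨le_refl _, by rw [this]; linarith⟩
  set F : ℝ → ℝ := fun x => ‖ψ x‖ ^ 2 + ‖φ x‖ ^ 2 with hF
  set B : ℝ := 1 + 1/|Real.sin (k*π)| with hB
  have hBpos : 0 < B := by
    have : 0 < |Real.sin (k*π)| := abs_pos.mpr hks
    positivity
  -- pointwise bound on each interval
  have hFbound : ∀ j : ℤ, ∀ x ∈ I j,
      F x ≤ 4*B^2 * (‖a j‖^2 + ‖a (j+1)‖^2) := by
    intro j x hx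
    have h1 := abs_psiRec_le A hks a j x
    have h2 := abs_psiRec_le (-A) hks a j x
    rw [← hB] at h1 h2
    rw [hF]
    simp only [hψ j x hx, hφ' j x hx]
    have hn1 : (0:ℝ) ≤ ‖psiRec A k a j x‖ := norm_nonneg _
    have hn2 : (0:ℝ) ≤ ‖psiRec (-A) k a j x‖ := norm_nonneg _
    have h1' := pow_le_pow_left₀ hn1 h1 2
    have h2' := pow_le_pow_left₀ hn2 h2 2
    nlinarith [mul_nonneg (sq_nonneg B) (sq_nonneg (‖a j‖ - ‖a (j+1)‖))]
  -- integrability of F on each piece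
  have hFcont : ∀ j : ℤ, MeasureTheory.IntegrableOn F (I j) := by
    intro j
    have hG : Continuous (fun x => ‖psiRec A k a j x‖ ^ 2
        + ‖psiRec (-A) k a j x‖ ^ 2) :=
      (continuous_abs_sq_psiRec A k a j).add (continuous_abs_sq_psiRec (-A) k a j)
    have hGon : MeasureTheory.IntegrableOn (fun x => ‖psiRec A k a j x‖ ^ 2
        + ‖psiRec (-A) k a j x‖ ^ 2) (I j) :=
      (hG.integrableOn_Icc).mono_set Set.Ico_subset_Icc_self
    exact hGon.congr_fun (fun x hx => by
      simp only [hF, hψ j x hx, hφ' j x hx]) (hIm j)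
  have hψcont : ∀ j : ℤ, MeasureTheory.IntegrableOn
      (fun x => ‖ψ x‖^2) (I j) := by
    intro j
    have hGon : MeasureTheory.IntegrableOn (fun x => ‖psiRec A k a j x‖ ^ 2) (I j) :=
      ((continuous_abs_sq_psiRec A k a j).integrableOn_Icc).mono_set Set.Ico_subset_Icc_self
    exact hGon.congr_fun (fun x hx => by simp only [hψ j x hx]) (hIm j)
  have hFnonneg : ∀ x, 0 ≤ F x := fun x => by positivity
  constructor
  · constructor
    · -- Summable → Integrable
      intro hsum
      have hshift : Summable (fun j : ℤ => ‖a (j+1)‖ ^ 2) := by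
        have := (Equiv.addRight (1:ℤ)).summable_iff
          (f := fun j : ℤ => ‖a j‖ ^ 2)
        exact this.mpr hsum
      rw [← MeasureTheory.integrableOn_univ, ← hcover]
      apply MeasureTheory.integrableOn_iUnion_of_summable_integral_norm hFcont
      have hbound : ∀ j : ℤ, ∫ x in I j, ‖F x‖
          ≤ π * (4*B^2) * (‖a j‖^2 + ‖a (j+1)‖^2) := by
        intro j
        have heq : ∀ x, ‖F x‖ = F x := fun x => Real.norm_of_nonneg (hFnonneg x)
        simp only [heq]
        have hconst : MeasureTheory.IntegrableOn
            (fun _ : ℝ => 4*B^2 * (‖a j‖^2 + ‖a (j+1)‖^2)) (I j) := by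
          rw [MeasureTheory.integrableOn_const_iff]
          right
          rw [hI]
          simp only [Real.volume_Ico]
          exact ENNReal.ofReal_lt_top
        calc ∫ x in I j, F x
            ≤ ∫ _ in I j, 4*B^2 * (‖a j‖^2 + ‖a (j+1)‖^2) :=
              MeasureTheory.setIntegral_mono_on (hFcont j) hconst (hIm j) (hFbound j)
          _ = (MeasureTheory.volume (I j)).toReal
              * (4*B^2 * (‖a j‖^2 + ‖a (j+1)‖^2)) := by
              rw [MeasureTheory.setIntegral_const]; rfl
          _ = π * (4*B^2) * (‖a j‖^2 + ‖a (j+1)‖^2) := by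
              rw [hI]
              simp only [Real.volume_Ico]
              rw [show ((j:ℝ)+1)*π - (j:ℝ)*π = π by ring, ENNReal.toReal_ofReal hπ.le]
              ring
      apply Summable.of_nonneg_of_le
        (fun j => MeasureTheory.integral_nonneg (fun x => norm_nonneg _)) hbound
      exact ((hsum.add hshift).mul_left (π * (4*B^2)))
    · -- Integrable → Summable
      intro hInt
      obtain ⟨c, hc, hlow⟩ := lower_per_interval A hk a
      have hIntUnion : MeasureTheory.IntegrableOn F (⋃ j, I j) := by
        rw [hcover, MeasureTheory.integrableOn_univ]; exact hInt
      have hSumInt : Summable (fun j : ℤ => ∫ x in I j, F x) :=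
        (MeasureTheory.hasSum_integral_iUnion hIm hdisj hIntUnion).summable
      apply Summable.of_nonneg_of_le (fun j => sq_nonneg _)
        (fun j => ?_) (hSumInt.mul_left (1/c))
      have step1 : c * ‖a j‖ ^ 2 ≤ ∫ x in I j, ‖ψ x‖^2 := by
        have := hlow j
        rwa [show (∫ x in Set.Ico ((j : ℝ) * π) (((j : ℝ) + 1) * π),
            ‖psiRec A k a j x‖ ^ 2) = ∫ x in I j, ‖ψ x‖^2 from
          MeasureTheory.setIntegral_congr_fun (hIm j)
            (fun x hx => by simp only [hψ j x hx])] at this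
      have step2 : (∫ x in I j, ‖ψ x‖^2) ≤ ∫ x in I j, F x := by
        apply MeasureTheory.setIntegral_mono_on (hψcont j) (hInt.integrableOn) (hIm j)
        intro x _
        show ‖ψ x‖^2 ≤ ‖ψ x‖^2 + ‖φ x‖^2
        nlinarith [sq_nonneg (‖φ x‖)]
      rw [one_div]
      calc ‖a j‖^2 = c⁻¹ * (c * ‖a j‖^2) := by
            rw [← mul_assoc, inv_mul_cancel₀ (ne_of_gt hc), one_mul]
        _ ≤ c⁻¹ * ∫ x in I j, F x := by
            gcongr
            exact le_trans step1 step2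
  · constructor
    · -- bounded a → bounded ψ, φ
      rintro ⟨C, hC⟩
      have hC0 : 0 ≤ C := le_trans (norm_nonneg (a 0)) (hC 0)
      refine ⟨B * (2*C), fun x => ?_⟩
      set j := ⌊x/π⌋
      have hx := hmemI x
      constructor
      · rw [hψ j x hx]
        calc ‖psiRec A k a j x‖
            ≤ B * (‖a j‖ + ‖a (j+1)‖) := abs_psiRec_le A hks a j x
          _ ≤ B * (2*C) := by
              have := hC j; have := hC (j+1)
              gcongr
              linarith [hC j, hC (j+1)]
      · rw [hφ' j x hx]
        calc ‖psiRec (-A) k a j x‖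
            ≤ B * (‖a j‖ + ‖a (j+1)‖) := abs_psiRec_le (-A) hks a j x
          _ ≤ B * (2*C) := by
              gcongr
              linarith [hC j, hC (j+1)]
    · -- bounded ψ, φ → bounded a
      rintro ⟨C, hC⟩
      refine ⟨C, fun j => ?_⟩
      have := (hC ((j:ℝ)*π)).1
      rwa [hψ j _ (hjmem j), psiRec_apply_left] at this
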